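/- Let K ⊂ ℝⁿ be a convex body in John's position in a convex body L with contact data (a_i, u_i, v_i)_{i=1}^m, and suppose L ⊂ −nK. If x ∈ ∂L satisfies ‖−x‖_K ≥ (1−ε₁)n for some 0 ≤ ε₁ < 1, then there exists an index i with ⟨x, v_i⟩ ≥ 1 − ε₁. -/

import Mathlib

open RealInnerProductSpace Pointwise

/-- The polar body of a set in Euclidean space. -/
def polarSet {n : ℕ} (M : Set (EuclideanSpace ℝ (Fin n))) : Set (EuclideanSpace ℝ (Fin n)) :=
  {x | ∀ y ∈ M, inner ℝ x y ≤ (1 : ℝ)}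

theorem exists_contact_functional_near_one {n m : ℕ} (hm : 0 < m)
    (K L : Set (EuclideanSpace ℝ (Fin n)))
    (hKcomp : IsCompact K) (hKconv : Convex ℝ K) (h0K : 0 ∈ interior K)
    (hLcomp : IsCompact L) (hLconv : Convex ℝ L) (h0L : 0 ∈ interior L)
    (hKL : K ⊆ L)
    (a : Fin m → ℝ) (u v : Fin m → EuclideanSpace ℝ (Fin n))
    (ha : ∀ i, 0 < a i)
    (hu : ∀ i, u i ∈ frontier K ∩ frontier L)
    (hv : ∀ i, v i ∈ frontier (polarSet K) ∩ frontier (polarSet L))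
    (huv : ∀ i, ⟪u i, v i⟫ = 1)
    (hid : ∀ y : EuclideanSpace ℝ (Fin n), y = ∑ i, (a i * ⟪y, u i⟫) • v i)
    (hu0 : ∑ i, a i • u i = 0) (hv0 : ∑ i, a i • v i = 0)
    (hLnK : L ⊆ (-(n : ℝ)) • K)
    (x : EuclideanSpace ℝ (Fin n)) (hx : x ∈ frontier L)
    (ε₁ : ℝ) (hε0 : 0 ≤ ε₁) (hε1 : ε₁ < 1)
    (hxK : gauge K (-x) ≥ (1 - ε₁) * n) :
    ∃ i, ⟪x, v i⟫ ≥ 1 - ε₁ := by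
  by_contra hcon
  push_neg at hcon
  have hKcl : IsClosed K := hKcomp.isClosed
  have huK : ∀ i, u i ∈ K := fun i => hKcl.frontier_subset (hu i).1
  -- key bilinear identity
  have key : ∀ z y : EuclideanSpace ℝ (Fin n),
      ⟪z, y⟫ = ∑ i, a i * (⟪z, u i⟫ * ⟪v i, y⟫) := by
    intro z y
    conv_lhs => rw [hid z]
    rw [sum_inner]
    refine Finset.sum_congr rfl fun i _ => ?_
    rw [real_inner_smul_left]; ring
  -- trace : ∑ a = n
  have htrace : ∑ i, a i = (n : ℝ) := by
    set b := EuclideanSpace.basisFun (Fin n) ℝ with hb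
    have h1 : ∀ j, ⟪(b j : EuclideanSpace ℝ (Fin n)), b j⟫ = (1 : ℝ) := by
      intro j
      rw [real_inner_self_eq_norm_sq, b.orthonormal.1 j]; norm_num
    have h2 : ∑ j, ⟪(b j : EuclideanSpace ℝ (Fin n)), b j⟫ = (n : ℝ) := by
      simp [h1]
    rw [show (∑ j, ⟪(b j : EuclideanSpace ℝ (Fin n)), b j⟫)
        = ∑ j, ∑ i, a i * (⟪b j, u i⟫ * ⟪v i, b j⟫) from
        Finset.sum_congr rfl fun j _ => key (b j) (b j)] at h2
    rw [Finset.sum_comm] at h2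
    calc ∑ i, a i = ∑ i, a i * ⟪v i, u i⟫ := by
          refine Finset.sum_congr rfl fun i _ => ?_
          rw [real_inner_comm, huv i, mul_one]
      _ = (n : ℝ) := by
          rw [← h2]
          refine Finset.sum_congr rfl fun i _ => ?_
          rw [← Finset.mul_sum]
          congr 1
          rw [← b.sum_inner_mul_inner (v i) (u i)]
          refine Finset.sum_congr rfl fun j _ => ?_
          exact mul_comm _ _
  -- adjoint identity
  have hid' : ∀ z : EuclideanSpace ℝ (Fin n),
      z = ∑ i, (a i * ⟪z, v i⟫) • u i := by
    intro z
    apply ext_inner_right ℝ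
    intro y
    rw [sum_inner]
    conv_lhs => rw [real_inner_comm, key y z]
    refine Finset.sum_congr rfl fun i _ => ?_
    rw [real_inner_smul_left, real_inner_comm (v i) z, real_inner_comm (u i) y]
    ring
  -- sum of a i * t i is zero
  have hsumt : ∑ i, a i * ⟪x, v i⟫ = 0 := by
    have h : ⟪x, ∑ i, a i • v i⟫ = 0 := by rw [hv0, inner_zero_right]
    rw [inner_sum] at h
    calc ∑ i, a i * ⟪x, v i⟫ = ∑ i, ⟪x, a i • v i⟫ :=
          Finset.sum_congr rfl fun i _ => (real_inner_smul_right _ _ _).symm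
      _ = 0 := h
  -- maximal index
  obtain ⟨i₀, -, hi₀⟩ := Finset.exists_max_image Finset.univ (fun i => ⟪x, v i⟫)
    ⟨⟨0, hm⟩, Finset.mem_univ _⟩
  set T : ℝ := ⟪x, v i₀⟫ with hT
  have hTle : ∀ i, ⟪x, v i⟫ ≤ T := fun i => hi₀ i (Finset.mem_univ i)
  have hTlt : T < 1 - ε₁ := hcon i₀
  have hapos : 0 < ∑ i, a i :=
    Finset.sum_pos (fun i _ => ha i) ⟨⟨0, hm⟩, Finset.mem_univ _⟩
  have hnpos : (0 : ℝ) < n := htrace ▸ hapos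
  -- T is positive
  have hTpos : 0 < T := by
    by_contra hTnp
    push_neg at hTnp
    have hall : ∀ i ∈ Finset.univ, a i * ⟪x, v i⟫ = 0 := by
      rw [← Finset.sum_eq_zero_iff_of_nonpos]
      · exact hsumt
      · intro i _
        exact mul_nonpos_of_nonneg_of_nonpos (ha i).le ((hTle i).trans hTnp)
    have hx0 : x = 0 := by
      rw [hid' x, Finset.sum_eq_zero]
      intro i _
      rw [hall i (Finset.mem_univ i), zero_smul]
    rw [hx0, neg_zero, gauge_zero] at hxK
    nlinarith
  -- the convex combination
  have hcu : ∑ i, (a i * (T - ⟪x, v i⟫)) • u i = -x := by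
    have : ∀ i, (a i * (T - ⟪x, v i⟫)) • u i
        = T • (a i • u i) - (a i * ⟪x, v i⟫) • u i := by
      intro i
      rw [smul_smul, ← sub_smul]
      congr 1; ring
    rw [Finset.sum_congr rfl fun i _ => this i, Finset.sum_sub_distrib,
      ← Finset.smul_sum, hu0, smul_zero, zero_sub, ← hid' x]
  set S : ℝ := (n : ℝ) * T with hS
  have hSpos : 0 < S := mul_pos hnpos hTpos
  have hcsum : ∑ i, a i * (T - ⟪x, v i⟫) = S := by
    have : ∀ i, a i * (T - ⟪x, v i⟫) = T * a i - a i * ⟪x, v i⟫ := fun i => by ring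
    rw [Finset.sum_congr rfl fun i _ => this i, Finset.sum_sub_distrib,
      ← Finset.mul_sum, hsumt, htrace, sub_zero, hS, mul_comm]
  have hzK : S⁻¹ • (-x) ∈ K := by
    rw [← hcu, Finset.smul_sum]
    have := hKconv.sum_mem (t := Finset.univ)
      (w := fun i => S⁻¹ * (a i * (T - ⟪x, v i⟫))) (z := u)
      (fun i _ => mul_nonneg (inv_nonneg.2 hSpos.le)
        (mul_nonneg (ha i).le (sub_nonneg.2 (hTle i))))
      (by rw [← Finset.mul_sum, hcsum, inv_mul_cancel₀ hSpos.ne'])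
      (fun i _ => huK i)
    simpa [smul_smul] using this
  have hgauge : gauge K (-x) ≤ S := by
    have h1 : gauge K (S⁻¹ • (-x)) ≤ 1 := gauge_le_one_of_mem hzK
    have h2 : gauge K (-x) = S * gauge K (S⁻¹ • (-x)) := by
      conv_lhs => rw [show -x = S • (S⁻¹ • (-x)) by
        rw [smul_smul, mul_inv_cancel₀ hSpos.ne', one_smul]]
      rw [gauge_smul_of_nonneg hSpos.le, smul_eq_mul]
    rw [h2]
    calc S * gauge K (S⁻¹ • (-x)) ≤ S * 1 := by
          exact mul_le_mul_of_nonneg_left h1 hSpos.le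
      _ = S := mul_one S
  have : (1 - ε₁) * n ≤ (n : ℝ) * T := le_trans hxK hgauge
  nlinarith
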